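/- Let T ∈ ℝ^{(d−r)×k} and S ∈ ℝ^{r×k}, and let γ > 0 with γ‖S‖² ≤ 1/2 and γ‖T‖² ≤ 1/2. Define N(T) = T − γ(T TᵀT + T SᵀS). Then ‖N(T) Sᵀ‖ ≤ ‖T Sᵀ‖, where ‖·‖ is the spectral norm. -/

import Mathlib

open Matrix

/-- Spectral (operator) norm of a real matrix, via the induced Euclidean operator norm. -/
noncomputable def specNorm {m n : ℕ} (A : Matrix (Fin m) (Fin n) ℝ) : ℝ :=
  ‖(Matrix.toEuclideanLin (𝕜 := ℝ) A).toContinuousLinearMap‖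

noncomputable def mCLM {m n : ℕ} (A : Matrix (Fin m) (Fin n) ℝ) :
    EuclideanSpace ℝ (Fin n) →L[ℝ] EuclideanSpace ℝ (Fin m) :=
  (Matrix.toEuclideanLin (𝕜 := ℝ) A).toContinuousLinearMap

lemma specNorm_eq {m n : ℕ} (A : Matrix (Fin m) (Fin n) ℝ) : specNorm A = ‖mCLM A‖ := rfl

lemma mCLM_mul {m n p : ℕ} (A : Matrix (Fin m) (Fin n) ℝ) (B : Matrix (Fin n) (Fin p) ℝ) :
    mCLM (A * B) = (mCLM A).comp (mCLM B) := by
  apply ContinuousLinearMap.coe_injective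
  ext x
  simp [mCLM, Matrix.toEuclideanLin_apply, Matrix.mulVec_mulVec]

lemma mCLM_transpose {m n : ℕ} (A : Matrix (Fin m) (Fin n) ℝ) :
    mCLM Aᵀ = ContinuousLinearMap.adjoint (mCLM A) := by
  have h : Aᵀ = Aᴴ := by ext i j; simp [Matrix.conjTranspose_apply]
  rw [mCLM, h, Matrix.toEuclideanLin_conjTranspose_eq_adjoint,
    LinearMap.adjoint_toContinuousLinearMap]
  rfl

set_option maxHeartbeats 1000000 in
/-- Core contraction lemma: if `γ ‖f‖² ≤ 1/2` then `‖(1/2)•1 - γ • (f ∘ f*)‖ ≤ 1/2`. -/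
lemma contraction {m n : ℕ} (f : EuclideanSpace ℝ (Fin m) →L[ℝ] EuclideanSpace ℝ (Fin n))
    (g : EuclideanSpace ℝ (Fin n) →L[ℝ] EuclideanSpace ℝ (Fin m))
    (hfg : f = ContinuousLinearMap.adjoint g) (γ : ℝ) (hγ : 0 < γ)
    (hb : γ * ‖g‖ ^ 2 ≤ 1 / 2) :
    ‖(1/2 : ℝ) • (1 : EuclideanSpace ℝ (Fin m) →L[ℝ] EuclideanSpace ℝ (Fin m)) - γ • (g.comp f)‖ ≤ 1/2 := by
  apply ContinuousLinearMap.opNorm_le_bound _ (by norm_num)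
  intro x
  set B := (1/2 : ℝ) • (1 : EuclideanSpace ℝ (Fin m) →L[ℝ] EuclideanSpace ℝ (Fin m))
    - γ • (g.comp f)
  have hkey : ‖B x‖ ^ 2 ≤ (1/2 * ‖x‖) ^ 2 := by
    have hBx : B x = (1/2 : ℝ) • x - γ • g (f x) := by simp [B]
    have hinner : inner ℝ (x : EuclideanSpace ℝ (Fin m)) (g (f x)) = ‖f x‖ ^ 2 := by
      rw [← ContinuousLinearMap.adjoint_inner_left, ← hfg]
      exact real_inner_self_eq_norm_sq _
    have hexp : ‖B x‖ ^ 2 = 1/4 * ‖x‖ ^ 2 - γ * ‖f x‖ ^ 2 + γ ^ 2 * ‖g (f x)‖ ^ 2 := by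
      rw [hBx, ← real_inner_self_eq_norm_sq]
      rw [inner_sub_sub_self]
      simp only [inner_smul_left, inner_smul_right, real_inner_self_eq_norm_sq,
        _root_.map_smul, RCLike.star_def, conj_trivial, smul_eq_mul]
      have h2 : inner ℝ (g (f x)) (x : EuclideanSpace ℝ (Fin m)) = ‖f x‖ ^ 2 := by
        rw [real_inner_comm]; exact hinner
      rw [hinner, h2]; ring
    have hg2 : ‖g (f x)‖ ^ 2 ≤ ‖g‖ ^ 2 * ‖f x‖ ^ 2 := by
      rw [← mul_pow]
      apply pow_le_pow_left₀ (norm_nonneg _) (g.le_opNorm _)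
    have hstep : γ ^ 2 * ‖g (f x)‖ ^ 2 ≤ (γ / 2) * ‖f x‖ ^ 2 := by
      calc γ ^ 2 * ‖g (f x)‖ ^ 2 ≤ γ ^ 2 * (‖g‖ ^ 2 * ‖f x‖ ^ 2) := by
            apply mul_le_mul_of_nonneg_left hg2 (sq_nonneg _)
        _ = (γ * ‖g‖ ^ 2) * (γ * ‖f x‖ ^ 2) := by ring
        _ ≤ (1/2) * (γ * ‖f x‖ ^ 2) := by
            apply mul_le_mul_of_nonneg_right hb
            positivity
        _ = (γ / 2) * ‖f x‖ ^ 2 := by ring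
    have : ‖B x‖ ^ 2 ≤ 1/4 * ‖x‖ ^ 2 - (γ/2) * ‖f x‖ ^ 2 := by
      rw [hexp]; nlinarith [hstep]
    nlinarith [mul_nonneg (by positivity : (0:ℝ) ≤ γ/2) (sq_nonneg ‖f x‖)]
  have h1 : 0 ≤ 1/2 * ‖x‖ := by positivity
  nlinarith [norm_nonneg (B x)]

set_option maxHeartbeats 1000000 in
theorem stmt12 {d r k : ℕ} (T : Matrix (Fin (d - r)) (Fin k) ℝ) (S : Matrix (Fin r) (Fin k) ℝ)
    (γ : ℝ) (hγpos : 0 < γ) (hγS : γ * specNorm S ^ 2 ≤ 1 / 2) (hγT : γ * specNorm T ^ 2 ≤ 1 / 2)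
    (N : Matrix (Fin (d - r)) (Fin k) ℝ) (hN : N = T - γ • (T * Tᵀ * T + T * Sᵀ * S)) :
    specNorm (N * Sᵀ) ≤ specNorm (T * Sᵀ) := by
  set t := mCLM T
  set s := mCLM S
  set ts := mCLM (T * Sᵀ)
  have hts : ts = t.comp (ContinuousLinearMap.adjoint s) := by
    rw [show ts = mCLM (T * Sᵀ) from rfl, mCLM_mul, mCLM_transpose]
  -- decomposition
  have hdecomp : mCLM (N * Sᵀ) =
      ((1/2 : ℝ) • (1 : _) - γ • (t.comp (ContinuousLinearMap.adjoint t))).comp ts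
      + ts.comp ((1/2 : ℝ) • (1 : _) - γ • (s.comp (ContinuousLinearMap.adjoint s))) := by
    have hmat : N * Sᵀ = ((1/2 : ℝ) • 1 - γ • (T * Tᵀ)) * (T * Sᵀ)
        + (T * Sᵀ) * ((1/2 : ℝ) • 1 - γ • (S * Sᵀ)ᵀ) := by
      subst hN
      simp only [Matrix.sub_mul, Matrix.mul_sub, Matrix.smul_mul, Matrix.mul_smul,
        Matrix.add_mul, Matrix.one_mul, Matrix.mul_one, Matrix.transpose_mul,
        Matrix.transpose_transpose]
      rw [show T * Tᵀ * (T * Sᵀ) = T * Tᵀ * T * Sᵀ from (Matrix.mul_assoc _ _ _).symm,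
        show T * Sᵀ * (S * Sᵀ) = T * Sᵀ * S * Sᵀ from (Matrix.mul_assoc _ _ _).symm, smul_add]
      module
    rw [hmat]
    have e1 : mCLM (((1/2 : ℝ) • 1 - γ • (T * Tᵀ)) * (T * Sᵀ))
        = (mCLM ((1/2 : ℝ) • 1 - γ • (T * Tᵀ))).comp ts := mCLM_mul _ _
    have e2 : mCLM ((T * Sᵀ) * ((1/2 : ℝ) • 1 - γ • (S * Sᵀ)ᵀ))
        = ts.comp (mCLM (((1/2 : ℝ) • 1 - γ • (S * Sᵀ)ᵀ))) := mCLM_mul _ _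
    have hadd : mCLM (((1/2 : ℝ) • 1 - γ • (T * Tᵀ)) * (T * Sᵀ)
        + (T * Sᵀ) * ((1/2 : ℝ) • 1 - γ • (S * Sᵀ)ᵀ))
        = mCLM (((1/2 : ℝ) • 1 - γ • (T * Tᵀ)) * (T * Sᵀ))
          + mCLM ((T * Sᵀ) * ((1/2 : ℝ) • 1 - γ • (S * Sᵀ)ᵀ)) := by
      simp [mCLM, map_add]
    rw [hadd, e1, e2]
    congr 1
    · congr 1
      have : mCLM ((1/2 : ℝ) • 1 - γ • (T * Tᵀ)) =
          (1/2 : ℝ) • mCLM (1 : Matrix (Fin (d-r)) (Fin (d-r)) ℝ) - γ • mCLM (T * Tᵀ) := by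
        simp [mCLM, map_sub, _root_.map_smul]
      rw [this, mCLM_mul, mCLM_transpose]
      congr 1
      · congr 1
        apply ContinuousLinearMap.coe_injective
        ext x
        simp [mCLM, Matrix.toEuclideanLin_apply, Matrix.one_mulVec]
    · congr 1
      have h' : ((1/2 : ℝ) • 1 - γ • (S * Sᵀ)ᵀ : Matrix (Fin r) (Fin r) ℝ)
          = (1/2 : ℝ) • 1 - γ • (S * Sᵀ) := by
        congr 1
        rw [Matrix.transpose_mul, Matrix.transpose_transpose]
      rw [h']
      have : mCLM ((1/2 : ℝ) • 1 - γ • (S * Sᵀ)) =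
          (1/2 : ℝ) • mCLM (1 : Matrix (Fin r) (Fin r) ℝ) - γ • mCLM (S * Sᵀ) := by
        simp [mCLM, map_sub, _root_.map_smul]
      rw [this, mCLM_mul, mCLM_transpose]
      congr 1
      · congr 1
        apply ContinuousLinearMap.coe_injective
        ext x
        simp [mCLM, Matrix.toEuclideanLin_apply, Matrix.one_mulVec]
  have hT' : ‖((1/2 : ℝ) • (1 : EuclideanSpace ℝ (Fin (d-r)) →L[ℝ] EuclideanSpace ℝ (Fin (d-r)))
      - γ • (t.comp (ContinuousLinearMap.adjoint t)))‖ ≤ 1/2 :=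
    contraction (ContinuousLinearMap.adjoint t) t rfl γ hγpos hγT
  have hS' : ‖((1/2 : ℝ) • (1 : EuclideanSpace ℝ (Fin r) →L[ℝ] EuclideanSpace ℝ (Fin r))
      - γ • (s.comp (ContinuousLinearMap.adjoint s)))‖ ≤ 1/2 :=
    contraction (ContinuousLinearMap.adjoint s) s rfl γ hγpos hγS
  rw [specNorm_eq, specNorm_eq, hdecomp]
  calc ‖_ + _‖ ≤ _ := norm_add_le _ _
    _ ≤ (1/2) * ‖ts‖ + ‖ts‖ * (1/2) := by
        gcongr
        · exact le_trans (ContinuousLinearMap.opNorm_comp_le _ _)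
            (mul_le_mul_of_nonneg_right hT' (norm_nonneg _))
        · exact le_trans (ContinuousLinearMap.opNorm_comp_le _ _)
            (mul_le_mul_of_nonneg_left hS' (norm_nonneg _))
    _ = ‖ts‖ := by ring
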